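/- For every integer n ≥ 1, the number of permutations of an n-element set possessing a cycle of length strictly greater than n/2 (fixed points counting as cycles of length 1), divided by n!, equals Σ_{j=1}^n (−1)^{j+1}/j = 1 − 1/2 + 1/3 − ⋯ ± 1/n (equivalently, it equals Σ_{n/2 < j ≤ n} 1/j). -/

import Mathlib

open Finset
open scoped Classical

/-- The multiset of all cycle lengths of a permutation of `Fin n`, counting each fixed point
as a cycle of length 1. -/
def fullCycleType {n : ℕ} (σ : Equiv.Perm (Fin n)) : Multiset ℕ :=
  σ.cycleType + Multiset.replicate (n - σ.support.card) 1

namespace LongCycleAux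

open Equiv Equiv.Perm

variable {α : Type*} [Fintype α] [DecidableEq α]

/-- The orbit of `x` under `σ`, as a finset. -/
noncomputable def orb (σ : Perm α) (x : α) : Finset α :=
  Finset.univ.filter (σ.SameCycle x)

/-- The length of the cycle of `σ` containing `x` (1 for fixed points). -/
noncomputable def cLen (σ : Perm α) (x : α) : ℕ := (orb σ x).card

lemma mem_orb {σ : Perm α} {x y : α} : y ∈ orb σ x ↔ σ.SameCycle x y := by
  simp [orb]

lemma orb_eq_of_fixed {σ : Perm α} {x : α} (h : σ x = x) : orb σ x = {x} := by
  ext y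
  simp only [mem_orb, Finset.mem_singleton]
  constructor
  · rintro ⟨i, rfl⟩
    exact zpow_apply_eq_self_of_apply_eq_self h i
  · rintro rfl; exact Equiv.Perm.SameCycle.refl _ _

lemma orb_eq_support_cycleOf {σ : Perm α} {x : α} (h : σ x ≠ x) :
    orb σ x = (σ.cycleOf x).support := by
  ext y
  rw [mem_orb, Equiv.Perm.mem_support_cycleOf_iff]
  exact ⟨fun hc => ⟨hc, Equiv.Perm.mem_support.2 h⟩, fun hc => hc.1⟩

lemma mem_orb_self (σ : Perm α) (x : α) : x ∈ orb σ x :=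
  mem_orb.2 (Equiv.Perm.SameCycle.refl _ _)

lemma cLen_pos (σ : Perm α) (x : α) : 0 < cLen σ x :=
  Finset.card_pos.2 ⟨x, mem_orb_self σ x⟩

lemma cLen_of_fixed {σ : Perm α} {x : α} (h : σ x = x) : cLen σ x = 1 := by
  rw [cLen, orb_eq_of_fixed h, Finset.card_singleton]

lemma cLen_eq_one_iff {σ : Perm α} {x : α} : cLen σ x = 1 ↔ σ x = x := by
  refine ⟨fun h => ?_, cLen_of_fixed⟩
  by_contra hx
  have h2 : 2 ≤ (σ.cycleOf x).support.card :=
    Equiv.Perm.two_le_card_support_cycleOf_iff.2 hx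
  rw [cLen, orb_eq_support_cycleOf hx] at h
  omega

lemma pow_apply_eq_iff {σ : Perm α} {x : α} {k : ℕ} :
    (σ ^ k) x = x ↔ cLen σ x ∣ k := by
  by_cases h : σ x = x
  · simp [cLen_of_fixed h, Equiv.Perm.pow_apply_eq_self_of_apply_eq_self h]
  · rw [cLen, orb_eq_support_cycleOf h]
    exact (σ.isCycleOn_support_cycleOf x).pow_apply_eq
      (Equiv.Perm.mem_support_cycleOf_iff.2 ⟨Equiv.Perm.SameCycle.refl _ _,
        Equiv.Perm.mem_support.2 h⟩)

lemma pow_cLen_apply (σ : Perm α) (x : α) : (σ ^ cLen σ x) x = x :=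
  pow_apply_eq_iff.2 dvd_rfl

lemma orb_conj (τ σ : Perm α) (x : α) :
    orb (τ * σ * τ⁻¹) (τ x) = (orb σ x).image τ := by
  ext y
  simp only [mem_orb, Finset.mem_image]
  constructor
  · intro h
    refine ⟨τ⁻¹ y, ?_, by simp⟩
    have := Equiv.Perm.sameCycle_conj.mp h
    simpa using this
  · rintro ⟨z, hz, rfl⟩
    exact hz.conj

lemma cLen_conj (τ σ : Perm α) (x : α) :
    cLen (τ * σ * τ⁻¹) (τ x) = cLen σ x := by
  rw [cLen, orb_conj, Finset.card_image_of_injective _ τ.injective]; rfl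

lemma count_cLen_indep (x y : α) (j : ℕ) :
    (univ.filter fun σ : Perm α => cLen σ x = j).card
      = (univ.filter fun σ : Perm α => cLen σ y = j).card := by
  set τ := Equiv.swap x y with hτ
  apply Finset.card_bij' (fun σ _ => τ * σ * τ⁻¹) (fun σ _ => τ⁻¹ * σ * τ)
  · intro σ hσ
    simp only [Finset.mem_filter, Finset.mem_univ, true_and] at hσ ⊢
    have : τ x = y := Equiv.swap_apply_left x y
    rw [← this, cLen_conj, hσ]
  · intro σ hσ
    simp only [Finset.mem_filter, Finset.mem_univ, true_and] at hσ ⊢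
    have h1 : τ⁻¹ y = x := by simp [hτ]
    have := cLen_conj τ⁻¹ σ y
    rw [h1, inv_inv] at this
    rw [this, hσ]
  · intro σ _; group
  · intro σ _; group

section Decompose

variable {n : ℕ}

lemma decompose_apply_succ_of_ne (q : Fin n) (e : Perm (Fin n)) (x : Fin n) (hx : e x ≠ q) :
    Equiv.Perm.decomposeFin.symm (q.succ, e) x.succ = (e x).succ := by
  rw [Equiv.Perm.decomposeFin_symm_apply_succ]
  apply Equiv.swap_apply_of_ne_of_ne
  · exact Fin.succ_ne_zero _
  · simpa [Fin.succ_inj] using hx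

lemma decompose_apply_succ_of_eq (q : Fin n) (e : Perm (Fin n)) (x : Fin n) (hx : e x = q) :
    Equiv.Perm.decomposeFin.symm (q.succ, e) x.succ = 0 := by
  rw [Equiv.Perm.decomposeFin_symm_apply_succ, hx, Equiv.swap_apply_right]

lemma decompose_pow_formula (q : Fin n) (e : Perm (Fin n)) :
    ∀ k, k < cLen e q →
      ((Equiv.Perm.decomposeFin.symm (q.succ, e) : Perm (Fin (n+1))) ^ (k+1)) 0
        = ((e ^ k) q).succ := by
  intro k
  induction k with
  | zero => intro _; simp
  | succ k ih =>
    intro hk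
    have hk' : k < cLen e q := by omega
    have h1 : (e ^ (k+1)) q ≠ q := by
      intro h
      have := pow_apply_eq_iff.1 h
      have := Nat.le_of_dvd (by omega) this
      omega
    have h2 : e ((e ^ k) q) = (e ^ (k+1)) q := by
      rw [pow_succ']; rfl
    calc ((Equiv.Perm.decomposeFin.symm (q.succ, e) : Perm (Fin (n+1))) ^ (k+1+1)) 0
        = Equiv.Perm.decomposeFin.symm (q.succ, e)
            (((Equiv.Perm.decomposeFin.symm (q.succ, e) : Perm (Fin (n+1))) ^ (k+1)) 0) := by
          rw [pow_succ']; rfl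
      _ = Equiv.Perm.decomposeFin.symm (q.succ, e) ((e ^ k) q).succ := by rw [ih hk']
      _ = ((e ^ (k+1)) q).succ := by
          rw [decompose_apply_succ_of_ne _ _ _ (by rw [h2]; exact h1), h2]

lemma decompose_pow_top (q : Fin n) (e : Perm (Fin n)) :
    ((Equiv.Perm.decomposeFin.symm (q.succ, e) : Perm (Fin (n+1))) ^ (cLen e q + 1)) 0 = 0 := by
  have hL : 0 < cLen e q := cLen_pos e q
  obtain ⟨L, hLe⟩ : ∃ L, cLen e q = L + 1 := ⟨cLen e q - 1, by omega⟩
  have hf := decompose_pow_formula q e L (by omega)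
  have hq' : (e ^ (L+1)) q = q := by rw [← hLe]; exact pow_cLen_apply e q
  have h2 : e ((e ^ L) q) = q := by
    have h3 : (e ^ (L+1)) q = e ((e ^ L) q) := by rw [pow_succ']; rfl
    rw [← h3, hq']
  rw [hLe]
  calc ((Equiv.Perm.decomposeFin.symm (q.succ, e) : Perm (Fin (n+1))) ^ (L+1+1)) 0
      = Equiv.Perm.decomposeFin.symm (q.succ, e)
          (((Equiv.Perm.decomposeFin.symm (q.succ, e) : Perm (Fin (n+1))) ^ (L+1)) 0) := by
        rw [pow_succ']; rfl
    _ = Equiv.Perm.decomposeFin.symm (q.succ, e) ((e ^ L) q).succ := by rw [hf]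
    _ = 0 := decompose_apply_succ_of_eq _ _ _ h2

lemma orb_decompose (q : Fin n) (e : Perm (Fin n)) :
    orb (Equiv.Perm.decomposeFin.symm (q.succ, e)) 0
      = insert 0 ((orb e q).image Fin.succ) := by
  set σ : Perm (Fin (n+1)) := Equiv.Perm.decomposeFin.symm (q.succ, e) with hσ
  set L := cLen e q with hL
  have hLpos : 0 < L := cLen_pos e q
  have hper : ∀ m : ℕ, (σ ^ m) 0 = (σ ^ (m % (L+1))) 0 := by
    intro m
    have hpt : Function.IsPeriodicPt σ (L+1) 0 := by
      show (⇑σ)^[L+1] 0 = 0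
      rw [Equiv.Perm.iterate_eq_pow]
      exact decompose_pow_top q e
    have := hpt.iterate_mod_apply m
    rw [Equiv.Perm.iterate_eq_pow, Equiv.Perm.iterate_eq_pow] at this
    exact this.symm
  ext y
  simp only [mem_orb, Finset.mem_insert, Finset.mem_image]
  constructor
  · intro h
    obtain ⟨i, hipos, hile, hy⟩ := Equiv.Perm.SameCycle.exists_pow_eq σ h
    rw [hper i] at hy
    rcases Nat.eq_zero_or_pos (i % (L+1)) with h0 | hpos
    · left; rw [h0] at hy; simpa using hy.symm
    · right
      obtain ⟨k, hk⟩ : ∃ k, i % (L+1) = k + 1 := ⟨i % (L+1) - 1, by omega⟩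
      have hkL : k < L := by
        have := Nat.mod_lt i (show 0 < L + 1 by omega)
        omega
      rw [hk, decompose_pow_formula q e k hkL] at hy
      exact ⟨(e ^ k) q, ⟨(k : ℤ), by rw [zpow_natCast]⟩, hy⟩
  · rintro (rfl | ⟨z, hz, rfl⟩)
    · exact Equiv.Perm.SameCycle.refl _ _
    · have hz' : e.SameCycle q z := hz
      by_cases hq : e q = q
      · have hzq : z = q := by
          obtain ⟨i, hi⟩ := hz'
          rw [← hi]
          exact zpow_apply_eq_self_of_apply_eq_self hq i
        subst hzq
        exact ⟨1, by simp [hσ]⟩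
      · obtain ⟨i, hiL, hiy⟩ := hz'.exists_pow_eq_of_mem_support (Equiv.Perm.mem_support.2 hq)
        have hiL' : i < L := by
          rwa [hL, cLen, orb_eq_support_cycleOf hq]
        refine ⟨((i+1 : ℕ) : ℤ), ?_⟩
        rw [zpow_natCast, decompose_pow_formula q e i hiL', hiy]

lemma cLen_decompose_succ (q : Fin n) (e : Perm (Fin n)) :
    cLen (Equiv.Perm.decomposeFin.symm (q.succ, e)) 0 = cLen e q + 1 := by
  rw [cLen, orb_decompose]
  rw [Finset.card_insert_of_notMem, Finset.card_image_of_injective _ (Fin.succ_injective n)]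
  · rfl
  · intro h0
    obtain ⟨z, _, hz⟩ := Finset.mem_image.1 h0
    exact Fin.succ_ne_zero z hz

lemma cLen_decompose_zero (e : Perm (Fin n)) :
    cLen (Equiv.Perm.decomposeFin.symm ((0 : Fin (n+1)), e)) 0 = 1 :=
  cLen_of_fixed (Equiv.Perm.decomposeFin_symm_apply_zero 0 e)

end Decompose

lemma count_cLen : ∀ n : ℕ, 1 ≤ n → ∀ (x : Fin n) (j : ℕ), 1 ≤ j → j ≤ n →
    (Finset.univ.filter fun σ : Perm (Fin n) => cLen σ x = j).card = (n-1).factorial := by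
  intro n
  induction n with
  | zero => intro h; omega
  | succ n ih =>
    intro _ x j hj1 hj2
    rcases Nat.eq_zero_or_pos n with rfl | hn
    · have hj : j = 1 := by omega
      subst hj
      have hall : (Finset.univ.filter fun σ : Perm (Fin 1) => cLen σ x = 1) = Finset.univ := by
        apply Finset.filter_true_of_mem
        intro σ _
        exact cLen_of_fixed (Subsingleton.elim _ _)
      rw [hall, Finset.card_univ, Fintype.card_perm]
      simp
    · rw [count_cLen_indep x 0 j, Finset.univ_perm_fin_succ, Finset.filter_map,
        Finset.card_map]
      simp only [Equiv.coe_toEmbedding, Function.comp_def]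
      rw [Finset.card_filter, Fintype.sum_prod_type, Fin.sum_univ_succ]
      rcases eq_or_lt_of_le hj1 with h1 | h1
      · -- j = 1
        cases h1
        have t1 : ∀ e : Perm (Fin n),
            (if cLen (Equiv.Perm.decomposeFin.symm ((0 : Fin (n+1)), e)) 0 = 1 then (1:ℕ) else 0)
              = 1 := fun e => if_pos (cLen_decompose_zero e)
        have t2 : ∀ (q : Fin n) (e : Perm (Fin n)),
            (if cLen (Equiv.Perm.decomposeFin.symm (q.succ, e)) 0 = 1 then (1:ℕ) else 0) = 0 := by
          intro q e
          rw [if_neg]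
          rw [cLen_decompose_succ]
          have := cLen_pos e q
          omega
        simp only [t1, t2, Finset.sum_const, Finset.sum_const_zero, smul_eq_mul, mul_one,
          add_zero, Finset.card_univ, Fintype.card_perm, Fintype.card_fin]
        rfl
      · -- 2 ≤ j
        obtain ⟨j', rfl⟩ : ∃ j', j = j' + 1 := ⟨j - 1, by omega⟩
        have hj'1 : 1 ≤ j' := by omega
        have hj'2 : j' ≤ n := by omega
        have t1 : ∀ e : Perm (Fin n),
            (if cLen (Equiv.Perm.decomposeFin.symm ((0 : Fin (n+1)), e)) 0 = j' + 1
              then (1:ℕ) else 0) = 0 := by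
          intro e
          rw [if_neg]
          rw [cLen_decompose_zero]
          omega
        have t2 : ∀ (q : Fin n) (e : Perm (Fin n)),
            (if cLen (Equiv.Perm.decomposeFin.symm (q.succ, e)) 0 = j' + 1 then (1:ℕ) else 0)
              = (if cLen e q = j' then (1:ℕ) else 0) := by
          intro q e
          rw [cLen_decompose_succ]
          exact if_congr (by omega) rfl rfl
        simp only [t1, t2, Finset.sum_const_zero, zero_add]
        have inner : ∀ q : Fin n,
            (∑ e : Perm (Fin n), if cLen e q = j' then (1:ℕ) else 0) = (n-1).factorial := by
          intro q
          rw [← Finset.card_filter]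
          exact ih hn q j' hj'1 hj'2
        rw [Finset.sum_congr rfl (fun q _ => inner q), Finset.sum_const, smul_eq_mul,
          Finset.card_univ, Fintype.card_fin]
        rw [Nat.mul_factorial_pred (Nat.pos_iff_ne_zero.mp hn)]
        rfl

section FCT

variable {n : ℕ}

lemma sum_fullCycleType (σ : Perm (Fin n)) : (fullCycleType σ).sum = n := by
  rw [fullCycleType, Multiset.sum_add, Equiv.Perm.sum_cycleType, Multiset.sum_replicate,
    smul_eq_mul, mul_one]
  have h : σ.support.card ≤ n := by
    have := Finset.card_le_univ σ.support
    simpa using this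
  omega

lemma one_le_of_mem_fullCycleType {σ : Perm (Fin n)} {l : ℕ} (h : l ∈ fullCycleType σ) :
    1 ≤ l := by
  rw [fullCycleType, Multiset.mem_add] at h
  rcases h with h | h
  · have := Equiv.Perm.two_le_of_mem_cycleType h; omega
  · rw [Multiset.eq_of_mem_replicate h]

lemma le_n_of_mem_fullCycleType {σ : Perm (Fin n)} {l : ℕ} (h : l ∈ fullCycleType σ) :
    l ≤ n := by
  have := Multiset.single_le_sum (fun x _ => Nat.zero_le x) l h
  rwa [sum_fullCycleType] at this

lemma count_one_fullCycleType (σ : Perm (Fin n)) :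
    (fullCycleType σ).count 1 = n - σ.support.card := by
  rw [fullCycleType, Multiset.count_add, Multiset.count_replicate]
  have h0 : σ.cycleType.count 1 = 0 := Multiset.count_eq_zero.2 (fun h => by
    have := Equiv.Perm.two_le_of_mem_cycleType h; omega)
  simp [h0]

lemma count_fullCycleType_of_two_le (σ : Perm (Fin n)) {j : ℕ} (hj : 2 ≤ j) :
    (fullCycleType σ).count j = σ.cycleType.count j := by
  rw [fullCycleType, Multiset.count_add, Multiset.count_replicate, if_neg (by omega)]
  ring

lemma count_le_one_of_lt (σ : Perm (Fin n)) {j : ℕ} (h : n < 2 * j) :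
    (fullCycleType σ).count j ≤ 1 := by
  by_contra h'
  have h2 : Multiset.replicate 2 j ≤ fullCycleType σ :=
    Multiset.le_count_iff_replicate_le.1 (by omega)
  obtain ⟨u, hu⟩ := Multiset.le_iff_exists_add.1 h2
  have : (fullCycleType σ).sum = 2 * j + u.sum := by
    rw [hu, Multiset.sum_add, Multiset.sum_replicate, smul_eq_mul]
  rw [sum_fullCycleType] at this
  omega

lemma card_cLen_eq (σ : Perm (Fin n)) (j : ℕ) (hj : 1 ≤ j) :
    (Finset.univ.filter fun x : Fin n => cLen σ x = j).card
      = j * (fullCycleType σ).count j := by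
  rcases eq_or_lt_of_le hj with h1 | h1
  · -- j = 1
    cases h1
    rw [count_one_fullCycleType, one_mul]
    have hfix : (Finset.univ.filter fun x : Fin n => cLen σ x = 1)
        = Finset.univ.filter fun x : Fin n => σ x = x := by
      apply Finset.filter_congr
      intro x _
      simp [cLen_eq_one_iff]
    rw [hfix]
    have hsupp : σ.support = Finset.univ.filter fun x : Fin n => ¬ σ x = x := by
      ext x; simp [Equiv.Perm.mem_support]
    have := Finset.card_filter_add_card_filter_not
      (s := (Finset.univ : Finset (Fin n))) (fun x => σ x = x)
    rw [← hsupp] at this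
    simp only [Finset.card_univ, Fintype.card_fin] at this
    omega
  · -- 2 ≤ j
    have hj2 : 2 ≤ j := h1
    have hset : (Finset.univ.filter fun x : Fin n => cLen σ x = j)
        = (σ.cycleFactorsFinset.filter fun c => c.support.card = j).biUnion
            (fun c => c.support) := by
      ext x
      simp only [Finset.mem_filter, Finset.mem_biUnion, Finset.mem_univ, true_and]
      constructor
      · intro hx
        have hσx : σ x ≠ x := by
          intro h
          rw [cLen_of_fixed h] at hx
          omega
        refine ⟨σ.cycleOf x,
          ⟨Equiv.Perm.cycleOf_mem_cycleFactorsFinset_iff.2 (Equiv.Perm.mem_support.2 hσx), ?_⟩,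
          ?_⟩
        · rw [← orb_eq_support_cycleOf hσx]; exact hx
        · exact Equiv.Perm.mem_support_cycleOf_iff.2
            ⟨Equiv.Perm.SameCycle.refl _ _, Equiv.Perm.mem_support.2 hσx⟩
      · rintro ⟨c, ⟨hc, hcard⟩, hxc⟩
        have happ : c x = σ x := (Equiv.Perm.mem_cycleFactorsFinset_iff.1 hc).2 x hxc
        have hσx : σ x ≠ x := by
          have hcx : c x ≠ x := Equiv.Perm.mem_support.1 hxc
          rwa [happ] at hcx
        have hcx : c = σ.cycleOf x := Equiv.Perm.cycle_is_cycleOf hxc hc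
        rw [cLen, orb_eq_support_cycleOf hσx, ← hcx, hcard]
    rw [hset, Finset.card_biUnion]
    · have hterm : ∀ c ∈ σ.cycleFactorsFinset.filter fun c => c.support.card = j,
          c.support.card = j := fun c hc => (Finset.mem_filter.1 hc).2
      rw [Finset.sum_congr rfl hterm, Finset.sum_const, smul_eq_mul]
      rw [count_fullCycleType_of_two_le σ hj2, Equiv.Perm.cycleType_def,
        Multiset.count_map]
      have : Multiset.filter (fun a => j = (Finset.card ∘ Equiv.Perm.support) a)
            σ.cycleFactorsFinset.val
          = Multiset.filter (fun c => c.support.card = j) σ.cycleFactorsFinset.val := by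
        apply Multiset.filter_congr
        intro c _
        simp [eq_comm, Function.comp]
      rw [this]
      rw [mul_comm]
      rfl
    · intro c hc d hd hcd
      have hc' := (Finset.mem_filter.1 hc).1
      have hd' := (Finset.mem_filter.1 hd).1
      exact (σ.cycleFactorsFinset_pairwise_disjoint hc' hd' hcd).disjoint_support

end FCT

lemma alt_sum_eq_tail_harmonic : ∀ n : ℕ, 1 ≤ n →
    ∑ j ∈ Finset.Icc 1 n, (-1 : ℝ) ^ (j + 1) / j
      = ∑ j ∈ Finset.Ioc (n / 2) n, (1 : ℝ) / j := by
  intro n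
  induction n with
  | zero => omega
  | succ n ih =>
    intro _
    rcases Nat.eq_zero_or_pos n with rfl | hn
    · norm_num
    · rw [Finset.sum_Icc_succ_top (by omega), ih hn]
      rcases Nat.even_or_odd n with he | ho
      · -- n even
        obtain ⟨m, rfl⟩ := he
        have h1 : (m + m + 1) / 2 = (m + m) / 2 := by omega
        rw [h1, Finset.sum_Ioc_succ_top (by omega)]
        have hpow : ((-1 : ℝ)) ^ (m + m + 1 + 1) = 1 := Even.neg_one_pow ⟨m + 1, by ring⟩
        rw [hpow]
      · -- n odd
        obtain ⟨m, rfl⟩ := ho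
        have h1 : (2 * m + 1 + 1) / 2 = m + 1 := by omega
        have h2 : (2 * m + 1) / 2 = m := by omega
        rw [h1, h2,
          Finset.sum_Ioc_succ_top (show m + 1 ≤ 2 * m + 1 by omega) (fun j => (1 : ℝ) / (j : ℝ))]
        have hsplit : Finset.Ioc m (2 * m + 1) = insert (m + 1) (Finset.Ioc (m + 1) (2 * m + 1)) := by
          ext y
          simp only [Finset.mem_Ioc, Finset.mem_insert]
          omega
        rw [hsplit, Finset.sum_insert (by simp)]
        have hodd : Odd (2 * m + 1 + 1 + 1) := ⟨m + 1, by ring⟩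
        rw [Odd.neg_one_pow hodd]
        have hm1 : ((m : ℝ) + 1) ≠ 0 := by positivity
        have hm2 : ((2 * m : ℝ) + 2) ≠ 0 := by positivity
        push_cast
        field_simp
        ring

end LongCycleAux

theorem prob_long_cycle_eq_alternating_sum (n : ℕ) (hn : 1 ≤ n) :
    ((Finset.univ.filter fun σ : Equiv.Perm (Fin n) =>
        ∃ l ∈ fullCycleType σ, 2 * l > n).card : ℝ) / (Nat.factorial n : ℝ) =
      ∑ j ∈ Finset.Icc 1 n, (-1 : ℝ) ^ (j + 1) / j := by
  rw [LongCycleAux.alt_sum_eq_tail_harmonic n hn]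
  have key1 : ∀ j ∈ Finset.Ioc (n/2) n,
      j * (Finset.univ.filter fun σ : Equiv.Perm (Fin n) => j ∈ fullCycleType σ).card
        = n.factorial := by
    intro j hj
    rw [Finset.mem_Ioc] at hj
    obtain ⟨hjl, hjn⟩ := hj
    have h2j : n < 2 * j := by omega
    have hj1 : 1 ≤ j := by omega
    have hA : ∀ σ : Equiv.Perm (Fin n),
        (Finset.univ.filter fun x : Fin n => LongCycleAux.cLen σ x = j).card
          = if j ∈ fullCycleType σ then j else 0 := by
      intro σ
      rw [LongCycleAux.card_cLen_eq σ j hj1]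
      by_cases hmem : j ∈ fullCycleType σ
      · have h1 : (fullCycleType σ).count j = 1 :=
          le_antisymm (LongCycleAux.count_le_one_of_lt σ h2j)
            (Multiset.one_le_count_iff_mem.2 hmem)
        rw [h1, if_pos hmem, mul_one]
      · rw [Multiset.count_eq_zero.2 hmem, if_neg hmem, mul_zero]
    have hsum : (∑ σ : Equiv.Perm (Fin n),
        (Finset.univ.filter fun x : Fin n => LongCycleAux.cLen σ x = j).card)
          = n.factorial := by
      have hswap : (∑ σ : Equiv.Perm (Fin n),
            (Finset.univ.filter fun x : Fin n => LongCycleAux.cLen σ x = j).card)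
          = ∑ x : Fin n, (Finset.univ.filter
              fun σ : Equiv.Perm (Fin n) => LongCycleAux.cLen σ x = j).card := by
        simp only [Finset.card_filter]
        exact Finset.sum_comm
      rw [hswap]
      have hx : ∀ x : Fin n, (Finset.univ.filter
          fun σ : Equiv.Perm (Fin n) => LongCycleAux.cLen σ x = j).card
            = (n-1).factorial :=
        fun x => LongCycleAux.count_cLen n hn x j hj1 hjn
      rw [Finset.sum_congr rfl (fun x _ => hx x), Finset.sum_const, smul_eq_mul,
        Finset.card_univ, Fintype.card_fin, Nat.mul_factorial_pred (Nat.pos_iff_ne_zero.mp hn)]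
    rw [← hsum, Finset.sum_congr rfl (fun σ _ => hA σ), ← Finset.sum_filter,
      Finset.sum_const, smul_eq_mul, mul_comm]
  have hfilter : (Finset.univ.filter fun σ : Equiv.Perm (Fin n) =>
        ∃ l ∈ fullCycleType σ, 2 * l > n)
      = (Finset.Ioc (n/2) n).biUnion
          (fun j => Finset.univ.filter fun σ : Equiv.Perm (Fin n) => j ∈ fullCycleType σ) := by
    ext σ
    simp only [Finset.mem_filter, Finset.mem_biUnion, Finset.mem_univ, true_and,
      Finset.mem_Ioc]
    constructor
    · rintro ⟨l, hl, h2l⟩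
      exact ⟨l, ⟨by omega, LongCycleAux.le_n_of_mem_fullCycleType hl⟩, hl⟩
    · rintro ⟨l, ⟨hl1, _⟩, hlm⟩
      exact ⟨l, hlm, by omega⟩
  have hdisj : ∀ a ∈ Finset.Ioc (n/2) n, ∀ b ∈ Finset.Ioc (n/2) n, a ≠ b →
      Disjoint (Finset.univ.filter fun σ : Equiv.Perm (Fin n) => a ∈ fullCycleType σ)
        (Finset.univ.filter fun σ : Equiv.Perm (Fin n) => b ∈ fullCycleType σ) := by
    intro a ha b hb hab
    rw [Finset.mem_Ioc] at ha hb
    rw [Finset.disjoint_left]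
    intro σ hσa hσb
    rw [Finset.mem_filter] at hσa hσb
    obtain ⟨t, ht⟩ := Multiset.exists_cons_of_mem hσa.2
    have hbt : b ∈ t := by
      have hb2 := hσb.2
      rw [ht, Multiset.mem_cons] at hb2
      tauto
    have hble : b ≤ t.sum := Multiset.single_le_sum (fun _ _ => Nat.zero_le _) b hbt
    have hs : (fullCycleType σ).sum = a + t.sum := by rw [ht, Multiset.sum_cons]
    rw [LongCycleAux.sum_fullCycleType] at hs
    omega
  rw [hfilter, Finset.card_biUnion hdisj, Nat.cast_sum, Finset.sum_div]
  apply Finset.sum_congr rfl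
  intro j hj
  have hk := key1 j hj
  rw [Finset.mem_Ioc] at hj
  have hj0 : (j : ℝ) ≠ 0 := Nat.cast_ne_zero.2 (by omega)
  have hf0 : ((n.factorial : ℕ) : ℝ) ≠ 0 := Nat.cast_ne_zero.2 n.factorial_ne_zero
  have hcast : (j : ℝ) * ((Finset.univ.filter
      fun σ : Equiv.Perm (Fin n) => j ∈ fullCycleType σ).card : ℝ) = (n.factorial : ℝ) := by
    exact_mod_cast congrArg (Nat.cast : ℕ → ℝ) hk
  field_simp
  linarith [hcast]
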